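/- For every odd positive integer n, and every monic polynomial f_1(x) over Z/2Z dividing x^n − 1, there exists a unique monic polynomial f(x) over Z/4Z dividing x^n − 1 in Z4[x] whose reduction modulo 2 equals f_1(x). -/

import Mathlib

open Polynomial

/-- Reduction mod 2 on coefficients, `ℤ/4 → ℤ/2`. -/
noncomputable def red2 : ZMod 4 →+* ZMod 2 := ZMod.castHom (show (2:ℕ) ∣ 4 by norm_num) (ZMod 2)

lemma red2_surj : Function.Surjective red2 := by
  intro b; fin_cases b
  · exact ⟨0, map_zero _⟩
  · exact ⟨1, map_one _⟩

lemma red2_zero_iff : ∀ a : ZMod 4, red2 a = 0 ↔ 2 * a = 0 := by decide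

lemma red2_two : red2 2 = 0 := by decide

lemma half_spec : ∀ a : ZMod 4, red2 a = 0 → 2 * ((a.val / 2 : ℕ) : ZMod 4) = a := by decide

/-- Kernel of coefficientwise reduction: polynomials mapping to zero are `2 · something`. -/
lemma exists_of_map_eq_zero {P : (ZMod 4)[X]} (h : P.map red2 = 0) :
    ∃ Q : (ZMod 4)[X], P = C 2 * Q := by
  have hc : ∀ i, red2 (P.coeff i) = 0 := by
    intro i
    have := congrArg (fun p => Polynomial.coeff p i) h
    simpa [Polynomial.coeff_map] using this
  refine ⟨P.sum fun i a => C ((a.val / 2 : ℕ) : ZMod 4) * X ^ i, ?_⟩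
  rw [Polynomial.sum, Finset.mul_sum]
  conv_lhs => rw [← Polynomial.sum_C_mul_X_pow_eq P, Polynomial.sum]
  refine Finset.sum_congr rfl fun i _ => ?_
  rw [← mul_assoc, ← Polynomial.C_mul, half_spec _ (hc i)]

lemma C2_mul_congr {P Q : (ZMod 4)[X]} (h : P.map red2 = Q.map red2) :
    C 2 * P = C 2 * Q := by
  have h0 : (P - Q).map red2 = 0 := by rw [Polynomial.map_sub, h, sub_self]
  obtain ⟨D, hD⟩ := exists_of_map_eq_zero h0
  have h4 : (C 2 : (ZMod 4)[X]) * C 2 = 0 := by rw [← Polynomial.C_mul, show (2*2 : ZMod 4) = 0 by decide, Polynomial.C_0]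
  have : C 2 * (P - Q) = 0 := by rw [hD, ← mul_assoc, h4, zero_mul]
  linear_combination this

lemma map_eq_zero_of_C2_mul {P : (ZMod 4)[X]} (h : C 2 * P = 0) : P.map red2 = 0 := by
  ext i
  have := congrArg (fun p => Polynomial.coeff p i) h
  simp only [Polynomial.coeff_C_mul, Polynomial.coeff_zero] at this
  simp [Polynomial.coeff_map, (red2_zero_iff _).2 this]

lemma degree_map_le_of_C2 {P D : (ZMod 4)[X]} (h : P = C 2 * D) :
    (D.map red2).degree ≤ P.degree := by
  rw [Polynomial.degree_le_iff_coeff_zero]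
  intro m hm
  have h0 : P.coeff m = 0 := Polynomial.coeff_eq_zero_of_degree_lt hm
  rw [h, Polynomial.coeff_C_mul] at h0
  simp [Polynomial.coeff_map, (red2_zero_iff _).2 h0]

lemma xn_sub_one_sep {n : ℕ} (hpos : 0 < n) (hn : Odd n) :
    ((X : (ZMod 2)[X]) ^ n - 1).Separable := by
  have hn2 : (n : ZMod 2) ≠ 0 := by
    rw [Ne, ZMod.natCast_eq_zero_iff]
    exact fun h => (Nat.not_even_iff_odd.mpr hn) ((even_iff_two_dvd).mpr h)
  simpa using Polynomial.separable_X_pow_sub_C (1 : ZMod 2) hn2 one_ne_zero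

lemma hensel_uniq {n : ℕ} (hpos : 0 < n) (hn : Odd n) {f f' : (ZMod 4)[X]}
    (hf : f.Monic) (hdvd : f ∣ X ^ n - 1) (hf' : f'.Monic) (hdvd' : f' ∣ X ^ n - 1)
    (hmap : f.map red2 = f'.map red2) : f = f' := by
  obtain ⟨g, hg⟩ := hdvd
  obtain ⟨g', hg'⟩ := hdvd'
  set f₁ : (ZMod 2)[X] := f.map red2 with hf₁
  have hf₁mon : f₁.Monic := hf.map red2
  have hXn : ((X : (ZMod 4)[X]) ^ n - 1).map red2 = X ^ n - 1 := by
    simp [Polynomial.map_sub, Polynomial.map_pow]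
  have hg1 : (X : (ZMod 2)[X]) ^ n - 1 = f₁ * g.map red2 := by
    rw [← hXn, hg, Polynomial.map_mul]
  have hg1' : (X : (ZMod 2)[X]) ^ n - 1 = f₁ * g'.map red2 := by
    rw [← hXn, hg', Polynomial.map_mul, ← hmap]
  have hgg' : g.map red2 = g'.map red2 :=
    mul_left_cancel₀ hf₁mon.ne_zero (hg1 ▸ hg1')
  have hcop : IsCoprime f₁ (g.map red2) :=
    Polynomial.Separable.isCoprime (hg1 ▸ xn_sub_one_sep hpos hn)
  haveI : Nontrivial (ZMod 4) := ⟨0, 1, by decide⟩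
  obtain ⟨D, hD⟩ := exists_of_map_eq_zero (show (f' - f).map red2 = 0 by
    rw [Polynomial.map_sub, ← hmap, ← hf₁, sub_self])
  obtain ⟨E, hE⟩ := exists_of_map_eq_zero (show (g' - g).map red2 = 0 by
    rw [Polynomial.map_sub, hgg', sub_self])
  have hzero : C 2 * (f' * E + D * g) = 0 := by
    have h1 : f' * g' = f * g := by rw [← hg, ← hg']
    linear_combination h1 - f' * hE - g * hD
  have hmap0 : (f' * E + D * g).map red2 = 0 := map_eq_zero_of_C2_mul hzero
  set d : (ZMod 2)[X] := D.map red2 with hd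
  have hrel : f₁ * E.map red2 + d * g.map red2 = 0 := by
    have := hmap0
    rw [Polynomial.map_add, Polynomial.map_mul, Polynomial.map_mul, ← hmap] at this
    exact this
  have hdvd_d : f₁ ∣ d := by
    refine (hcop.dvd_of_dvd_mul_right ⟨-(E.map red2), ?_⟩)
    linear_combination hrel
  -- degree bound
  have hdegf : f.degree = f₁.degree := (hf.degree_map red2).symm
  have hdegf' : f'.degree = f₁.degree := by
    rw [← hf'.degree_map red2, hmap]
  have hsub : (f' - f).degree < f₁.degree := by
    rcases eq_or_ne f' f with h | h
    · rw [h, sub_self, Polynomial.degree_zero]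
      exact bot_lt_iff_ne_bot.mpr fun hb => hf₁mon.ne_zero (Polynomial.degree_eq_bot.mp hb)
    · calc (f' - f).degree < f'.degree :=
            Polynomial.degree_sub_lt (hdegf'.trans hdegf.symm) hf'.ne_zero
              (by rw [hf'.leadingCoeff, hf.leadingCoeff])
        _ = f₁.degree := hdegf'
  have hdegd : d.degree < f₁.degree := lt_of_le_of_lt (degree_map_le_of_C2 hD) hsub
  have hd0 : d = 0 := by
    by_contra hne
    exact absurd (Polynomial.degree_le_of_dvd hdvd_d hne) (not_le.mpr hdegd)
  have : C 2 * D = C 2 * 0 := C2_mul_congr (by simp [← hd, hd0])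
  rw [mul_zero] at this
  have : f' - f = 0 := by rw [hD, this]
  exact (sub_eq_zero.mp this).symm

/-- Hensel lift: for odd `n`, every monic divisor `f₁` of `x^n - 1` over `ℤ/2` lifts to a
unique monic divisor `f` of `x^n - 1` over `ℤ/4` with mod-2 reduction `f₁`. -/
theorem hensel_lift_divisor (n : ℕ) (hpos : 0 < n) (hn : Odd n)
    (f₁ : Polynomial (ZMod 2)) (hmon : f₁.Monic)
    (hdvd : f₁ ∣ X ^ n - 1) :
    ∃! f : Polynomial (ZMod 4),
      f.Monic ∧ f ∣ X ^ n - 1 ∧ f.map red2 = f₁ := by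
  haveI : Nontrivial (ZMod 4) := ⟨0, 1, by decide⟩
  have hsurj : Function.Surjective (Polynomial.map red2 :
      (ZMod 4)[X] → (ZMod 2)[X]) := Polynomial.map_surjective red2 red2_surj
  obtain ⟨g₁, hg₁⟩ := hdvd
  have hcop : IsCoprime f₁ g₁ :=
    Polynomial.Separable.isCoprime (hg₁ ▸ xn_sub_one_sep hpos hn)
  obtain ⟨a, b, hab⟩ := hcop
  -- lift f₁ monically
  obtain ⟨F, hFmap, hFdeg, hFmon⟩ :=
    Polynomial.lifts_and_degree_eq_and_monic
      ((Polynomial.mem_lifts f₁).2 (hsurj f₁)) hmon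
  obtain ⟨G, hGmap⟩ := hsurj g₁
  -- the error term
  have hPmap : ((X : (ZMod 4)[X]) ^ n - 1 - F * G).map red2 = 0 := by
    rw [Polynomial.map_sub, Polynomial.map_sub, Polynomial.map_mul,
      Polynomial.map_pow, Polynomial.map_X, Polynomial.map_one, hFmap, hGmap,
      ← hg₁, sub_self]
  obtain ⟨E, hE⟩ := exists_of_map_eq_zero hPmap
  set e : (ZMod 2)[X] := E.map red2 with he
  set r : (ZMod 2)[X] := (b * e) %ₘ f₁ with hr
  have hmod : r + f₁ * ((b * e) /ₘ f₁) = b * e := Polynomial.modByMonic_add_div _ f₁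
  have key : r * g₁ + (a * e + ((b * e) /ₘ f₁) * g₁) * f₁ = e := by
    linear_combination g₁ * hmod + e * hab
  obtain ⟨R, hRmap, hRdeg⟩ :=
    Polynomial.mem_lifts_and_degree_eq ((Polynomial.mem_lifts r).2 (hsurj r))
  obtain ⟨V, hVmap⟩ := hsurj (a * e + ((b * e) /ₘ f₁) * g₁)
  set f : (ZMod 4)[X] := F + C 2 * R with hfdef
  have hfmon : f.Monic := by
    refine hFmon.add_of_left ?_
    calc (C 2 * R).degree ≤ (C (2 : ZMod 4)).degree + R.degree := Polynomial.degree_mul_le _ _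
      _ ≤ 0 + R.degree := add_le_add_left (Polynomial.degree_C_le) _
      _ = r.degree := by rw [zero_add, hRdeg]
      _ < f₁.degree := Polynomial.degree_modByMonic_lt _ hmon
      _ = F.degree := hFdeg.symm
  have hfmap : f.map red2 = f₁ := by
    rw [hfdef, Polynomial.map_add, Polynomial.map_mul, Polynomial.map_C, hFmap,
      hRmap, red2_two, Polynomial.C_0, zero_mul, add_zero]
  have h4 : (C 2 : (ZMod 4)[X]) * C 2 = 0 := by
    rw [← Polynomial.C_mul, show (2*2 : ZMod 4) = 0 by decide, Polynomial.C_0]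
  have hBB : C 2 * (R * G + V * F) = C 2 * E := by
    refine C2_mul_congr ?_
    rw [Polynomial.map_add, Polynomial.map_mul, Polynomial.map_mul, hRmap, hGmap,
      hVmap, hFmap, ← he]
    exact key
  have hfdvd : f ∣ X ^ n - 1 := by
    refine ⟨G + C 2 * V, ?_⟩
    have goal : f * (G + C 2 * V) = X ^ n - 1 := by
      linear_combination (-1 : (ZMod 4)[X]) * hE + hBB + R * V * h4
    exact goal.symm
  refine ⟨f, ⟨hfmon, hfdvd, hfmap⟩, ?_⟩
  rintro y ⟨hymon, hydvd, hymap⟩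
  exact hensel_uniq hpos hn hymon hydvd hfmon hfdvd (by rw [hymap, hfmap])
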